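/- Let n ≥ 1, b > 0, 1 < p < ∞. Let c ∈ ℝⁿ with c ≠ 0, m > 0, x* ∈ ℝⁿ and R > 0, and set E_R(x*) := B_R(x*) ∖ B̄_{R/2}(x*) (an open annulus). Then there exists an infinitely differentiable function h : ℝⁿ ∖ {x*} → ℝ such that: (i) h(y) = 0 for every y with |y − x*| = R; (ii) 0 ≤ h(x) ≤ m for every x with R/2 ≤ |x − x*| ≤ R; (iii) ⟨∇h(y), (y − x*)/R⟩ < 0 for every y with |y − x*| = R; (iv) |∇h(x)| ≤ |c|/2 for every x ∈ E_R(x*); and (v) the function v(x) := h(x) + ⟨c, x⟩ satisfies ∇v(x) ≠ 0 for all x ∈ E_R(x*) and div(∇E(∇v))(x) ≥ 0 for all x ∈ E_R(x*), where E(z) := b|z| + |z|^p/p (so that the inequality in (v) expresses that v is a classical subsolution: b·div(∇v/|∇v|)(x) + div(|∇v|^{p−2}∇v)(x) ≥ 0). -/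

import Mathlib

open MeasureTheory Set Metric Filter
open scoped RealInnerProductSpace Topology ENNReal

noncomputable section

/-- `φ` is a smooth test function compactly supported in `ω`. -/
def IsTestOn {n : ℕ} (ω : Set (EuclideanSpace ℝ (Fin n))) (φ : EuclideanSpace ℝ (Fin n) → ℝ) : Prop :=
  ContDiff ℝ (⊤ : ℕ∞) φ ∧ HasCompactSupport φ ∧ tsupport φ ⊆ ω

/-- The divergence of a vector field on Euclidean space, computed coordinatewise via `fderiv`. -/
def diverg {n : ℕ} (V : EuclideanSpace ℝ (Fin n) → EuclideanSpace ℝ (Fin n))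
    (x : EuclideanSpace ℝ (Fin n)) : ℝ :=
  ∑ i : Fin n, fderiv ℝ (fun y => V y i) x (EuclideanSpace.single i 1)

abbrev Euc (n : ℕ) := EuclideanSpace ℝ (Fin n)
noncomputable section
variable {F : Type*} [NormedAddCommGroup F] [InnerProductSpace ℝ F] [CompleteSpace F]

lemma hasFDerivAt_norm' {x : F} (hx : x ≠ 0) :
    HasFDerivAt (fun y : F => ‖y‖) (‖x‖⁻¹ • (innerSL ℝ x)) x := by
  have h1 : HasFDerivAt (fun y : F => ‖y‖ ^ 2) (2 • (innerSL ℝ x)) x :=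
    (hasStrictFDerivAt_norm_sq x).hasFDerivAt
  have hx2 : ‖x‖ ^ 2 ≠ 0 := pow_ne_zero 2 (norm_ne_zero_iff.mpr hx)
  have h2 : HasDerivAt Real.sqrt (1 / (2 * Real.sqrt (‖x‖ ^ 2))) (‖x‖ ^ 2) :=
    Real.hasDerivAt_sqrt hx2
  have h3 := h2.comp_hasFDerivAt x h1
  have key : (fun y : F => ‖y‖) = fun y : F => Real.sqrt (‖y‖ ^ 2) := by
    funext y; rw [Real.sqrt_sq (norm_nonneg y)]
  rw [key]
  refine h3.congr_fderiv ?_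
  ext w
  rw [Real.sqrt_sq (norm_nonneg x)]
  simp [smul_smul]
  field_simp

lemma hasGradientAt_of_hasFDerivAt_innerSL {f : F → ℝ} {g x : F}
    (h : HasFDerivAt f (innerSL ℝ g) x) : HasGradientAt f g x := by
  rw [hasGradientAt_iff_hasFDerivAt]
  refine h.congr_fderiv ?_
  ext w
  simp [InnerProductSpace.toDual_apply_apply]

lemma gradE_eq (b p : ℝ) (hp : 0 < p) {z : F} (hz : z ≠ 0) :
    HasGradientAt (fun y : F => b * ‖y‖ + ‖y‖ ^ p / p)
      ((b / ‖z‖ + ‖z‖ ^ (p - 2)) • z) z := by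
  have hz0 : (0:ℝ) < ‖z‖ := norm_pos_iff.mpr hz
  have hnorm := hasFDerivAt_norm' hz
  have hrpow : HasDerivAt (fun t : ℝ => t ^ p) (p * ‖z‖ ^ (p - 1)) ‖z‖ :=
    Real.hasDerivAt_rpow_const (Or.inl hz0.ne')
  have h2 : HasFDerivAt (fun y : F => ‖y‖ ^ p)
      ((p * ‖z‖ ^ (p - 1)) • (‖z‖⁻¹ • (innerSL ℝ z))) z := hrpow.comp_hasFDerivAt z hnorm
  have h3 : HasFDerivAt (fun y : F => b * ‖y‖ + ‖y‖ ^ p / p)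
      ((b • (‖z‖⁻¹ • (innerSL ℝ z))) + (p⁻¹ • ((p * ‖z‖ ^ (p - 1)) • (‖z‖⁻¹ • (innerSL ℝ z)))))
      z := by
    have hb' := hnorm.const_mul b
    have hp' : HasFDerivAt (fun y : F => ‖y‖ ^ p / p)
        (p⁻¹ • ((p * ‖z‖ ^ (p - 1)) • (‖z‖⁻¹ • (innerSL ℝ z)))) z := by
      simpa [div_eq_inv_mul] using h2.const_mul p⁻¹
    exact hb'.add hp'
  apply hasGradientAt_of_hasFDerivAt_innerSL
  refine h3.congr_fderiv ?_
  ext w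
  simp [inner_smul_left, real_inner_smul_left]
  have : ‖z‖ ^ (p-2) = p⁻¹ * (p * (‖z‖ ^ (p-1) * ‖z‖⁻¹)) := by
    rw [← Real.rpow_neg_one ‖z‖, ← Real.rpow_add hz0]
    field_simp
    ring_nf
  rw [this]
  field_simp

/-- scalar radial coefficient -/
def ff (ε α t : ℝ) : ℝ := -(ε * α * Real.exp (-(α * t))) / t
/-- its derivative -/
def fd (ε α t : ℝ) : ℝ := ε * α * Real.exp (-(α * t)) * (α * t + 1) / t ^ 2

lemma ff_hasDerivAt (ε α : ℝ) {t : ℝ} (ht : 0 < t) :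
    HasDerivAt (ff ε α) (fd ε α t) t := by
  have hin : HasDerivAt (fun s : ℝ => -(α * s)) (-α) t := by
    exact (((hasDerivAt_id' t).const_mul α).neg).congr_deriv (by ring)
  have hexp : HasDerivAt (fun s : ℝ => Real.exp (-(α * s)))
      (Real.exp (-(α * t)) * -α) t := by
    have := (Real.hasDerivAt_exp (-(α * t))).comp t hin; exact this
  have h1 : HasDerivAt (fun s : ℝ => -(ε * α * Real.exp (-(α * s))))
      (-(ε * α * (Real.exp (-(α * t)) * -α))) t := ((hexp.const_mul (ε * α)).neg)
  have h2 : HasDerivAt (fun s : ℝ => s⁻¹) (-(t ^ 2)⁻¹) t := by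
    simpa using hasDerivAt_inv ht.ne'
  have h3 := h1.mul h2
  have heq : ff ε α = fun s : ℝ => -(ε * α * Real.exp (-(α * s))) * s⁻¹ := by
    funext s; rw [ff, div_eq_mul_inv]
  rw [heq]
  refine h3.congr_deriv ?_
  rw [fd]
  field_simp

lemma hasFDerivAt_norm_sub {xs x : F} (hx : x ≠ xs) :
    HasFDerivAt (fun y : F => ‖y - xs‖) (‖x - xs‖⁻¹ • (innerSL ℝ (x - xs))) x := by
  have h1 : HasFDerivAt (fun y : F => y - xs) (ContinuousLinearMap.id ℝ F) x := by
    simpa using (hasFDerivAt_id x).sub_const xs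
  exact ((hasFDerivAt_norm' (sub_ne_zero.mpr hx)).comp x h1 :)

/-- the barrier function -/
def hfun (xs : F) (ε α R : ℝ) (x : F) : ℝ :=
  ε * (Real.exp (-(α * ‖x - xs‖)) - Real.exp (-(α * R)))

lemma hfun_hasGradientAt (xs : F) (ε α R : ℝ) {x : F} (hx : x ≠ xs) :
    HasGradientAt (hfun xs ε α R) (ff ε α ‖x - xs‖ • (x - xs)) x := by
  have hr : (0:ℝ) < ‖x - xs‖ := norm_pos_iff.mpr (sub_ne_zero.mpr hx)
  have hin : HasDerivAt (fun s : ℝ => -(α * s)) (-α) ‖x - xs‖ := by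
    exact (((hasDerivAt_id' ‖x - xs‖).const_mul α).neg).congr_deriv (by ring)
  have hexp : HasDerivAt (fun s : ℝ => Real.exp (-(α * s)))
      (Real.exp (-(α * ‖x - xs‖)) * -α) ‖x - xs‖ :=
    (Real.hasDerivAt_exp _).comp _ hin
  have hscal : HasDerivAt (fun s : ℝ => ε * (Real.exp (-(α * s)) - Real.exp (-(α * R))))
      (ε * (Real.exp (-(α * ‖x - xs‖)) * -α)) ‖x - xs‖ :=
    ((hexp.sub_const _).const_mul ε)
  have hcomp := hscal.comp_hasFDerivAt x (hasFDerivAt_norm_sub hx)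
  apply hasGradientAt_of_hasFDerivAt_innerSL
  have heq : hfun xs ε α R = fun y : F =>
      ε * (Real.exp (-(α * ‖y - xs‖)) - Real.exp (-(α * R))) := rfl
  rw [heq]
  refine hcomp.congr_fderiv ?_
  ext w
  simp only [ContinuousLinearMap.smul_apply, innerSL_apply_apply, real_inner_smul_left, smul_smul]
  rw [ff]
  rw [smul_eq_mul]
  field_simp

/-- the gradient of v = h + ⟨c,·⟩ -/
def zmap (xs c : F) (ε α : ℝ) (y : F) : F := c + ff ε α ‖y - xs‖ • (y - xs)

lemma zmap_hasFDerivAt (xs c : F) (ε α : ℝ) {x : F} (hx : x ≠ xs) :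
    HasFDerivAt (zmap xs c ε α)
      (ff ε α ‖x - xs‖ • ContinuousLinearMap.id ℝ F
        + ((fd ε α ‖x - xs‖ * ‖x - xs‖⁻¹) • innerSL ℝ (x - xs)).smulRight (x - xs)) x := by
  have hr : (0:ℝ) < ‖x - xs‖ := norm_pos_iff.mpr (sub_ne_zero.mpr hx)
  have hscal : HasFDerivAt (fun y : F => ff ε α ‖y - xs‖)
      (fd ε α ‖x - xs‖ • (‖x - xs‖⁻¹ • innerSL ℝ (x - xs))) x :=
    by have := (ff_hasDerivAt ε α hr).comp_hasFDerivAt x (hasFDerivAt_norm_sub hx); exact this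
  have hid : HasFDerivAt (fun y : F => y - xs) (ContinuousLinearMap.id ℝ F) x := by
    simpa using (hasFDerivAt_id x).sub_const xs
  have h1 := (hscal.smul hid).const_add c
  refine h1.congr_fderiv ?_
  rw [smul_smul]

lemma hvgrad (xs c : F) (ε α R : ℝ) {y : F} (hy : y ≠ xs) :
    HasGradientAt (fun w : F => hfun xs ε α R w + ⟪c, w⟫) (zmap xs c ε α y) y := by
  have h1 := (hfun_hasGradientAt xs ε α R hy).hasFDerivAt
  have h2 : HasFDerivAt (fun w : F => (⟪c, w⟫ : ℝ)) (innerSL ℝ c) y :=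
    (innerSL ℝ c).hasFDerivAt
  apply hasGradientAt_of_hasFDerivAt_innerSL
  have h3 := h1.add h2
  refine h3.congr_fderiv ?_
  ext w
  simp [zmap, inner_add_left, InnerProductSpace.toDual_apply_apply]
  ring

/-- coefficient K and derivative -/
def Kf (b p t : ℝ) : ℝ := b / t + t ^ (p - 2)
def Kdf (b p t : ℝ) : ℝ := -(b / t ^ 2) + (p - 2) * t ^ (p - 3)

lemma Kf_hasDerivAt (b p : ℝ) {t : ℝ} (ht : 0 < t) :
    HasDerivAt (Kf b p) (Kdf b p t) t := by
  have h1 : HasDerivAt (fun s : ℝ => b / s) (b * -(t ^ 2)⁻¹) t := by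
    simpa [div_eq_mul_inv, mul_comm] using (hasDerivAt_inv ht.ne').const_mul b
  have h2 : HasDerivAt (fun s : ℝ => s ^ (p - 2)) ((p - 2) * t ^ (p - 2 - 1)) t :=
    Real.hasDerivAt_rpow_const (Or.inl ht.ne')
  have h3 := h1.add h2
  have : Kf b p = fun s : ℝ => b / s + s ^ (p - 2) := rfl
  rw [this]
  refine h3.congr_deriv ?_
  rw [Kdf]
  have he : p - 2 - 1 = p - 3 := by ring
  rw [he]
  field_simp

/-- the full vector field W y = K(‖z y‖) • z y and its derivative -/
lemma W_hasFDerivAt (xs c : F) (b p ε α : ℝ) {x : F} (hx : x ≠ xs)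
    (hz : zmap xs c ε α x ≠ 0) :
    HasFDerivAt (fun y : F => Kf b p ‖zmap xs c ε α y‖ • zmap xs c ε α y)
      (Kf b p ‖zmap xs c ε α x‖ •
          (ff ε α ‖x - xs‖ • ContinuousLinearMap.id ℝ F
            + ((fd ε α ‖x - xs‖ * ‖x - xs‖⁻¹) • innerSL ℝ (x - xs)).smulRight (x - xs))
        + (Kdf b p ‖zmap xs c ε α x‖ •
            ((‖zmap xs c ε α x‖⁻¹ • innerSL ℝ (zmap xs c ε α x)).comp
              (ff ε α ‖x - xs‖ • ContinuousLinearMap.id ℝ F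
                + ((fd ε α ‖x - xs‖ * ‖x - xs‖⁻¹) • innerSL ℝ (x - xs)).smulRight
                    (x - xs)))).smulRight (zmap xs c ε α x)) x := by
  have hZ := zmap_hasFDerivAt xs c ε α (F := F) hx
  have hρ : HasFDerivAt (fun y : F => ‖zmap xs c ε α y‖)
      ((‖zmap xs c ε α x‖⁻¹ • innerSL ℝ (zmap xs c ε α x)).comp
        (ff ε α ‖x - xs‖ • ContinuousLinearMap.id ℝ F
          + ((fd ε α ‖x - xs‖ * ‖x - xs‖⁻¹) • innerSL ℝ (x - xs)).smulRight (x - xs))) x :=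
    (hasFDerivAt_norm' hz).comp x hZ
  have hρ0 : (0:ℝ) < ‖zmap xs c ε α x‖ := norm_pos_iff.mpr hz
  have hK : HasFDerivAt (fun y : F => Kf b p ‖zmap xs c ε α y‖)
      (Kdf b p ‖zmap xs c ε α x‖ •
        ((‖zmap xs c ε α x‖⁻¹ • innerSL ℝ (zmap xs c ε α x)).comp
          (ff ε α ‖x - xs‖ • ContinuousLinearMap.id ℝ F
            + ((fd ε α ‖x - xs‖ * ‖x - xs‖⁻¹) • innerSL ℝ (x - xs)).smulRight (x - xs)))) x :=
    by have := (Kf_hasDerivAt b p hρ0).comp_hasFDerivAt x hρ; exact this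
  exact hK.smul hZ

lemma diverg_formula (n : ℕ) (b p ε α R : ℝ) (hp : 0 < p)
    (xs c : EuclideanSpace ℝ (Fin n)) {x : EuclideanSpace ℝ (Fin n)} (hx : x ≠ xs)
    (hz : ∀ y : EuclideanSpace ℝ (Fin n), y ≠ xs → zmap xs c ε α y ≠ 0) :
    diverg (fun y => gradient (fun z : EuclideanSpace ℝ (Fin n) => b * ‖z‖ + ‖z‖ ^ p / p)
        (gradient (fun w => hfun xs ε α R w + ⟪c, w⟫) y)) x
    = Kf b p ‖zmap xs c ε α x‖ * (ff ε α ‖x - xs‖ * n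
        + fd ε α ‖x - xs‖ * ‖x - xs‖⁻¹ * ‖x - xs‖ ^ 2)
      + Kdf b p ‖zmap xs c ε α x‖ * ‖zmap xs c ε α x‖⁻¹ *
        (ff ε α ‖x - xs‖ * ‖zmap xs c ε α x‖ ^ 2
          + fd ε α ‖x - xs‖ * ‖x - xs‖⁻¹ * ⟪x - xs, zmap xs c ε α x⟫ ^ 2) := by
  set u : Euc n := x - xs with hu
  set zx : Euc n := zmap xs c ε α x with hzx
  set r : ℝ := ‖x - xs‖ with hr
  set ρ : ℝ := ‖zx‖ with hρ
  set Z : Euc n →L[ℝ] Euc n := ff ε α r • ContinuousLinearMap.id ℝ (Euc n)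
      + ((fd ε α r * r⁻¹) • innerSL ℝ u).smulRight u with hZ
  set DW : Euc n →L[ℝ] Euc n := Kf b p ρ • Z
      + (Kdf b p ρ • ((ρ⁻¹ • innerSL ℝ zx).comp Z)).smulRight zx with hDW
  have hW : HasFDerivAt (fun y : Euc n => Kf b p ‖zmap xs c ε α y‖ • zmap xs c ε α y) DW x :=
    W_hasFDerivAt xs c b p ε α hx (hz x hx)
  have hmem : ({xs}ᶜ : Set (Euc n)) ∈ 𝓝 x := isOpen_compl_singleton.mem_nhds hx
  have hEq : (fun y : Euc n => gradient (fun z : Euc n => b * ‖z‖ + ‖z‖ ^ p / p)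
      (gradient (fun w => hfun xs ε α R w + ⟪c, w⟫) y))
      =ᶠ[𝓝 x] (fun y : Euc n => Kf b p ‖zmap xs c ε α y‖ • zmap xs c ε α y) := by
    filter_upwards [hmem] with y hy
    have hy' : y ≠ xs := hy
    rw [(hvgrad xs c ε α R hy').gradient, (gradE_eq b p hp (hz y hy')).gradient]
    rfl
  have hco : ∀ i : Fin n, fderiv ℝ (fun y : Euc n => gradient (fun z : Euc n => b * ‖z‖ + ‖z‖ ^ p / p)
      (gradient (fun w => hfun xs ε α R w + ⟪c, w⟫) y) i) x (EuclideanSpace.single i 1)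
      = (DW (EuclideanSpace.single i 1)) i := by
    intro i
    have h1 : (fun y : Euc n => gradient (fun z : Euc n => b * ‖z‖ + ‖z‖ ^ p / p)
        (gradient (fun w => hfun xs ε α R w + ⟪c, w⟫) y) i)
        =ᶠ[𝓝 x] (fun y : Euc n => (Kf b p ‖zmap xs c ε α y‖ • zmap xs c ε α y) i) := by
      filter_upwards [hEq] with y hy
      rw [hy]
    rw [h1.fderiv_eq]
    have h2 := ((EuclideanSpace.proj (𝕜 := ℝ) i).hasFDerivAt).comp x hW
    have h3 : fderiv ℝ (fun y : Euc n => (Kf b p ‖zmap xs c ε α y‖ • zmap xs c ε α y) i) x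
        = (EuclideanSpace.proj (𝕜 := ℝ) i).comp DW := h2.fderiv
    rw [h3]
    rfl
  rw [diverg]
  rw [Finset.sum_congr rfl fun i _ => hco i]
  have happ : ∀ i : Fin n, (DW (EuclideanSpace.single i 1)) i
      = Kf b p ρ * ff ε α r
        + Kf b p ρ * (fd ε α r * r⁻¹) * (u i * u i)
        + Kdf b p ρ * ρ⁻¹ * ff ε α r * (zx i * zx i)
        + Kdf b p ρ * ρ⁻¹ * (fd ε α r * r⁻¹) * ⟪zx, u⟫ * (u i * zx i) := by
    intro i
    rw [hDW, hZ]
    simp only [ContinuousLinearMap.add_apply, ContinuousLinearMap.smul_apply,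
      ContinuousLinearMap.smulRight_apply, ContinuousLinearMap.comp_apply,
      ContinuousLinearMap.id_apply, innerSL_apply_apply, PiLp.add_apply, PiLp.smul_apply,
      smul_eq_mul, EuclideanSpace.inner_single_right, EuclideanSpace.single_apply,
      inner_add_right, real_inner_smul_right, conj_trivial, starRingEnd_apply, star_trivial,
      one_mul, mul_one, if_true, eq_self_iff_true]
    ring
  rw [Finset.sum_congr rfl fun i _ => happ i]
  have huu : ∑ i : Fin n, u i * u i = r ^ 2 := by
    rw [hr, ← hu, ← real_inner_self_eq_norm_sq]
    simp [PiLp.inner_apply, RCLike.inner_apply, conj_trivial]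
    rw [EuclideanSpace.real_norm_sq_eq]; simp [sq]
  have hzz : ∑ i : Fin n, zx i * zx i = ρ ^ 2 := by
    rw [hρ, ← real_inner_self_eq_norm_sq]
    simp [PiLp.inner_apply, RCLike.inner_apply, conj_trivial]
    rw [EuclideanSpace.real_norm_sq_eq]; simp [sq]
  have huz : ∑ i : Fin n, u i * zx i = ⟪u, zx⟫ := by
    simp [PiLp.inner_apply, RCLike.inner_apply, conj_trivial, mul_comm]
  simp only [Finset.sum_add_distrib, ← Finset.mul_sum, huu, hzz, huz, Finset.sum_const,
    Finset.card_univ, Fintype.card_fin, nsmul_eq_mul, smul_eq_mul]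
  rw [real_inner_comm zx u]
  ring

def lam0 (b p ρ1 ρ2 : ℝ) : ℝ := min (b / ρ2) ((p - 1) * min (ρ1 ^ (p - 2)) (ρ2 ^ (p - 2)))
def Mc (n : ℕ) (b p ρ1 ρ2 : ℝ) : ℝ :=
  n * (b / ρ1 + (ρ1 ^ (p - 2) + ρ2 ^ (p - 2))) + b / ρ1
    + (p + 2) * (ρ1 ^ (p - 2) + ρ2 ^ (p - 2))

set_option maxHeartbeats 1000000 in
lemma arith_key (n : ℕ) (b p ρ1 ρ2 R α ε r ρ t : ℝ)
    (hb : 0 < b) (hp : 1 < p) (hρ1 : 0 < ρ1) (hρ12 : ρ1 ≤ ρ2)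
    (hρa : ρ1 ≤ ρ) (hρb : ρ ≤ ρ2) (hR : 0 < R) (hra : R / 2 ≤ r)
    (hε : 0 < ε) (hα0 : 0 < α)
    (hα : 2 * Mc n b p ρ1 ρ2 / (R * lam0 b p ρ1 ρ2) ≤ α)
    (ht : t ^ 2 ≤ ρ ^ 2 * r ^ 2) :
    0 ≤ Kf b p ρ * (ff ε α r * n + fd ε α r * r⁻¹ * r ^ 2)
      + Kdf b p ρ * ρ⁻¹ * (ff ε α r * ρ ^ 2 + fd ε α r * r⁻¹ * t ^ 2) := by
  have hρ0 : 0 < ρ := lt_of_lt_of_le hρ1 hρa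
  have hρ20 : 0 < ρ2 := lt_of_lt_of_le hρ1 hρ12
  have hr0 : 0 < r := lt_of_lt_of_le (by linarith) hra
  set a : ℝ := ε * α * Real.exp (-(α * r)) with ha'
  have ha : 0 < a := by positivity
  set K : ℝ := Kf b p ρ with hK'
  set Kd : ℝ := Kdf b p ρ with hKd'
  set q : ℝ := t ^ 2 / (ρ * r ^ 2) with hq
  have hq0 : 0 ≤ q := by positivity
  have hqρ : q ≤ ρ := by
    rw [hq, div_le_iff₀ (by positivity)]
    nlinarith
  clear_value a K Kd q
  have hSeq : K * (ff ε α r * n + fd ε α r * r⁻¹ * r ^ 2)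
      + Kd * ρ⁻¹ * (ff ε α r * ρ ^ 2 + fd ε α r * r⁻¹ * t ^ 2)
      = (a / r) * ((α * r + 1) * (K + Kd * q) - (n * K + Kd * ρ)) := by
    rw [ff, fd, hq, ← ha']
    field_simp
    ring
  rw [hSeq]
  apply mul_nonneg (by positivity)
  -- rpow facts
  have hrp1pos : (0:ℝ) < ρ1 ^ (p - 2) := Real.rpow_pos_of_pos hρ1 _
  have hrp2pos : (0:ℝ) < ρ2 ^ (p - 2) := Real.rpow_pos_of_pos hρ20 _
  have hrppos : (0:ℝ) < ρ ^ (p - 2) := Real.rpow_pos_of_pos hρ0 _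
  set P : ℝ := ρ1 ^ (p - 2) + ρ2 ^ (p - 2) with hP
  clear_value P
  have hrp_low : min (ρ1 ^ (p - 2)) (ρ2 ^ (p - 2)) ≤ ρ ^ (p - 2) := by
    rcases le_total 0 (p - 2) with h | h
    · exact le_trans (min_le_left _ _) (Real.rpow_le_rpow hρ1.le hρa h)
    · exact le_trans (min_le_right _ _) (Real.rpow_le_rpow_of_nonpos hρ0 hρb h)
  have hrp_up : ρ ^ (p - 2) ≤ P := by
    rcases le_total 0 (p - 2) with h | h
    · have := Real.rpow_le_rpow hρ0.le hρb h
      rw [hP]; linarith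
    · have := Real.rpow_le_rpow_of_nonpos hρ1 hρa h
      rw [hP]; linarith
  have hlam_pos : 0 < lam0 b p ρ1 ρ2 := by
    apply lt_min (by positivity)
    exact mul_pos (by linarith) (lt_min hrp1pos hrp2pos)
  have hlamK : lam0 b p ρ1 ρ2 ≤ K := by
    have h1 : b / ρ2 ≤ b / ρ := by gcongr
    have : lam0 b p ρ1 ρ2 ≤ b / ρ2 := min_le_left _ _
    rw [hK', Kf]; linarith
  have hpow_mul : ρ ^ (p - 3) * ρ = ρ ^ (p - 2) := by
    nth_rewrite 2 [← Real.rpow_one ρ]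
    rw [← Real.rpow_add hρ0, show p - 3 + 1 = p - 2 by ring]
  have hKKd : K + Kd * ρ = (p - 1) * ρ ^ (p - 2) := by
    rw [hK', hKd', Kf, Kdf]
    have h2 : (-(b / ρ ^ 2) + (p - 2) * ρ ^ (p - 3)) * ρ
        = -(b / ρ) + (p - 2) * ρ ^ (p - 2) := by
      rw [← hpow_mul]
      field_simp
    rw [h2]
    ring
  have hlamKKd : lam0 b p ρ1 ρ2 ≤ (p - 1) * ρ ^ (p - 2) := by
    have h1 : (p - 1) * min (ρ1 ^ (p - 2)) (ρ2 ^ (p - 2)) ≤ (p - 1) * ρ ^ (p - 2) :=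
      mul_le_mul_of_nonneg_left hrp_low (by linarith)
    exact le_trans (min_le_right _ _) h1
  have hKq : lam0 b p ρ1 ρ2 ≤ K + Kd * q := by
    rcases le_total 0 Kd with h | h
    · have := mul_nonneg h hq0
      linarith
    · have h3 : Kd * ρ ≤ Kd * q := mul_le_mul_of_nonpos_left hqρ h
      linarith [hKKd ▸ hlamKKd]
  have hMup : (n : ℝ) * K + Kd * ρ ≤ Mc n b p ρ1 ρ2 := by
    have hK_up : K ≤ b / ρ1 + P := by
      have h1 : b / ρ ≤ b / ρ1 := by gcongr
      rw [hK', Kf]; linarith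
    have hKdρeq : Kd * ρ = -(b / ρ) + (p - 2) * ρ ^ (p - 2) := by
      rw [hKd', Kdf]
      rw [← hpow_mul]
      field_simp
    have hKdρ : Kd * ρ ≤ b / ρ1 + (p + 2) * P := by
      have hbr : 0 < b / ρ := by positivity
      have hbr1 : 0 < b / ρ1 := by positivity
      have hP0 : 0 < P := by rw [hP]; positivity
      rcases le_total p 2 with h | h
      · have e1 : (p - 2) * ρ ^ (p - 2) ≤ 0 :=
          mul_nonpos_iff.mpr (Or.inr ⟨by linarith, hrppos.le⟩)
        have e2 : 0 < (p + 2) * P := by positivity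
        calc Kd * ρ = -(b / ρ) + (p - 2) * ρ ^ (p - 2) := hKdρeq
          _ ≤ b / ρ1 + (p + 2) * P := by linarith only [hbr, hbr1, e1, e2]
      · have e1 : (p - 2) * ρ ^ (p - 2) ≤ (p - 2) * P :=
          mul_le_mul_of_nonneg_left hrp_up (by linarith)
        have e2 : (p - 2) * P ≤ (p + 2) * P :=
          mul_le_mul_of_nonneg_right (by linarith) hP0.le
        calc Kd * ρ = -(b / ρ) + (p - 2) * ρ ^ (p - 2) := hKdρeq
          _ ≤ b / ρ1 + (p + 2) * P := by linarith only [hbr, hbr1, e1, e2]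
    have hnK : (n : ℝ) * K ≤ (n : ℝ) * (b / ρ1 + P) :=
      mul_le_mul_of_nonneg_left hK_up (Nat.cast_nonneg n)
    rw [Mc, ← hP]; linarith
  have hαM : Mc n b p ρ1 ρ2 ≤ α * (R / 2) * lam0 b p ρ1 ρ2 := by
    rw [div_le_iff₀ (by positivity)] at hα
    nlinarith
  have h1 : α * (R / 2) ≤ α * r := mul_le_mul_of_nonneg_left hra hα0.le
  have hx1 : α * (R / 2) ≤ α * r + 1 := by linarith
  have h2 : α * (R / 2) * lam0 b p ρ1 ρ2 ≤ (α * r + 1) * (K + Kd * q) :=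
    mul_le_mul hx1 hKq hlam_pos.le (by positivity)
  linarith

lemma gnorm_eq (ε α : ℝ) (hε : 0 ≤ ε) (hα : 0 ≤ α) {xs x : F} (hx : x ≠ xs) :
    ‖ff ε α ‖x - xs‖ • (x - xs)‖ = ε * α * Real.exp (-(α * ‖x - xs‖)) := by
  have hr : (0:ℝ) < ‖x - xs‖ := norm_pos_iff.mpr (sub_ne_zero.mpr hx)
  rw [norm_smul, ff, Real.norm_eq_abs, abs_div, abs_neg,
    abs_of_nonneg (by positivity : (0:ℝ) ≤ ε * α * Real.exp (-(α * ‖x - xs‖))),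
    abs_of_pos hr]
  field_simp

lemma hfun_smooth (xs : F) (ε α R : ℝ) :
    ContDiffOn ℝ (⊤ : ℕ∞) (hfun xs ε α R) {xs}ᶜ := by
  intro x hx
  have hx' : x ≠ xs := hx
  apply ContDiffAt.contDiffWithinAt
  have hnorm : ContDiffAt ℝ (⊤ : ℕ∞) (fun y : F => ‖y - xs‖) x :=
    ContDiffAt.norm ℝ (contDiffAt_id.sub contDiffAt_const) (sub_ne_zero.mpr hx')
  have h2 : ContDiffAt ℝ (⊤ : ℕ∞) (fun y : F => -(α * ‖y - xs‖)) x :=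
    (contDiffAt_const.mul hnorm).neg
  have h3 : ContDiffAt ℝ (⊤ : ℕ∞) (fun y : F => Real.exp (-(α * ‖y - xs‖))) x :=
    Real.contDiff_exp.contDiffAt.comp x h2
  exact contDiffAt_const.mul (h3.sub contDiffAt_const)

set_option maxHeartbeats 1000000 in
theorem stmt_6 {n : ℕ} (hn : 1 ≤ n)
    (b p : ℝ) (hb : 0 < b) (hp : 1 < p)
    (c : EuclideanSpace ℝ (Fin n)) (hc : c ≠ 0) (m : ℝ) (hm : 0 < m)
    (xs : EuclideanSpace ℝ (Fin n)) (R : ℝ) (hR : 0 < R) :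
    ∃ h : EuclideanSpace ℝ (Fin n) → ℝ,
      ContDiffOn ℝ (⊤ : ℕ∞) h {xs}ᶜ ∧
      (∀ y, dist y xs = R → h y = 0) ∧
      (∀ x, R / 2 ≤ dist x xs → dist x xs ≤ R → 0 ≤ h x ∧ h x ≤ m) ∧
      (∀ y, dist y xs = R → ⟪gradient h y, R⁻¹ • (y - xs)⟫ < 0) ∧
      (∀ x ∈ ball xs R \ closedBall xs (R / 2), ‖gradient h x‖ ≤ ‖c‖ / 2) ∧
      (∀ x ∈ ball xs R \ closedBall xs (R / 2),
        gradient (fun y => h y + ⟪c, y⟫) x ≠ 0 ∧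
        0 ≤ diverg (fun y =>
            gradient (fun z : EuclideanSpace ℝ (Fin n) => b * ‖z‖ + ‖z‖ ^ p / p)
              (gradient (fun w => h w + ⟪c, w⟫) y)) x) := by
  have hc0 : (0:ℝ) < ‖c‖ := norm_pos_iff.mpr hc
  have hρ1 : (0:ℝ) < ‖c‖ / 2 := by positivity
  have hρ12 : ‖c‖ / 2 ≤ 3 * ‖c‖ / 2 := by linarith
  have hρ20 : (0:ℝ) < 3 * ‖c‖ / 2 := by positivity
  have hlam_pos : 0 < lam0 b p (‖c‖ / 2) (3 * ‖c‖ / 2) := by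
    exact lt_min (by positivity)
      (mul_pos (by linarith)
        (lt_min (Real.rpow_pos_of_pos hρ1 _) (Real.rpow_pos_of_pos hρ20 _)))
  set α : ℝ := max 1 (2 * Mc n b p (‖c‖ / 2) (3 * ‖c‖ / 2)
      / (R * lam0 b p (‖c‖ / 2) (3 * ‖c‖ / 2))) with hαdef
  have hα0 : (0:ℝ) < α := lt_of_lt_of_le one_pos (le_max_left _ _)
  have hαM : 2 * Mc n b p (‖c‖ / 2) (3 * ‖c‖ / 2)
      / (R * lam0 b p (‖c‖ / 2) (3 * ‖c‖ / 2)) ≤ α := le_max_right _ _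
  set ε : ℝ := min m (‖c‖ / (2 * α)) with hεdef
  have hε0 : 0 < ε := lt_min hm (by positivity)
  have hεm : ε ≤ m := min_le_left _ _
  have hεα : ε * α ≤ ‖c‖ / 2 := by
    have h1 : ε ≤ ‖c‖ / (2 * α) := min_le_right _ _
    have h2 : ε * α ≤ (‖c‖ / (2 * α)) * α := mul_le_mul_of_nonneg_right h1 hα0.le
    have h3 : (‖c‖ / (2 * α)) * α = ‖c‖ / 2 := by field_simp
    linarith
  clear_value α ε
  -- uniform gradient bound
  have hgb : ∀ x : EuclideanSpace ℝ (Fin n), x ≠ xs →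
      ‖ff ε α ‖x - xs‖ • (x - xs)‖ ≤ ‖c‖ / 2 := by
    intro x hx
    rw [gnorm_eq ε α hε0.le hα0.le hx]
    have he1 : Real.exp (-(α * ‖x - xs‖)) ≤ 1 := by
      rw [Real.exp_le_one_iff]
      have := norm_nonneg (x - xs)
      nlinarith
    nlinarith [mul_le_mul_of_nonneg_left he1 (by positivity : (0:ℝ) ≤ ε * α)]
  -- z is bounded away from 0
  have hzlow : ∀ y : EuclideanSpace ℝ (Fin n), y ≠ xs →
      ‖c‖ / 2 ≤ ‖zmap xs c ε α y‖ := by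
    intro y hy
    have h1 : ‖(c + ff ε α ‖y - xs‖ • (y - xs)) - ff ε α ‖y - xs‖ • (y - xs)‖
        ≤ ‖c + ff ε α ‖y - xs‖ • (y - xs)‖ + ‖ff ε α ‖y - xs‖ • (y - xs)‖ :=
      norm_sub_le _ _
    rw [add_sub_cancel_right] at h1
    have h2 := hgb y hy
    rw [zmap]
    linarith
  have hzne : ∀ y : EuclideanSpace ℝ (Fin n), y ≠ xs → zmap xs c ε α y ≠ 0 := by
    intro y hy h0
    have := hzlow y hy
    rw [h0, norm_zero] at this
    linarith
  have hzhigh : ∀ y : EuclideanSpace ℝ (Fin n), y ≠ xs →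
      ‖zmap xs c ε α y‖ ≤ 3 * ‖c‖ / 2 := by
    intro y hy
    have h1 : ‖c + ff ε α ‖y - xs‖ • (y - xs)‖ ≤ ‖c‖ + ‖ff ε α ‖y - xs‖ • (y - xs)‖ :=
      norm_add_le _ _
    have h2 := hgb y hy
    rw [zmap]
    linarith
  refine ⟨hfun xs ε α R, hfun_smooth xs ε α R, ?_, ?_, ?_, ?_, ?_⟩
  · -- vanishing on the outer sphere
    intro y hy
    rw [hfun, dist_eq_norm] at *
    rw [hy, sub_self, mul_zero]
  · -- bounds 0 ≤ h ≤ m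
    intro x h1 h2
    rw [dist_eq_norm] at h1 h2
    constructor
    · rw [hfun]
      have : Real.exp (-(α * R)) ≤ Real.exp (-(α * ‖x - xs‖)) := by
        apply Real.exp_le_exp.mpr
        nlinarith
      nlinarith
    · rw [hfun]
      have e1 : Real.exp (-(α * ‖x - xs‖)) ≤ 1 := by
        rw [Real.exp_le_one_iff]
        nlinarith
      have e2 : 0 < Real.exp (-(α * R)) := Real.exp_pos _
      nlinarith
  · -- strictly negative outer normal derivative
    intro y hy
    rw [dist_eq_norm] at hy
    have hy' : y ≠ xs := by
      intro h0
      rw [h0, sub_self, norm_zero] at hy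
      linarith
    rw [(hfun_hasGradientAt xs ε α R hy').gradient]
    rw [real_inner_smul_left, real_inner_smul_right, real_inner_self_eq_norm_sq, hy]
    have hffneg : ff ε α R < 0 := by
      rw [ff]
      apply div_neg_of_neg_of_pos _ hR
      have hpos : 0 < ε * α * Real.exp (-(α * R)) := by positivity
      linarith
    have : R⁻¹ * R ^ 2 = R := by field_simp
    rw [this]
    exact mul_neg_of_neg_of_pos hffneg hR
  · -- gradient bound on the annulus
    intro x hx
    obtain ⟨hx1, hx2⟩ := hx
    rw [mem_ball, dist_eq_norm] at hx1
    rw [mem_closedBall, dist_eq_norm, not_le] at hx2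
    have hxne : x ≠ xs := by
      intro h0
      rw [h0, sub_self, norm_zero] at hx2
      linarith
    rw [(hfun_hasGradientAt xs ε α R hxne).gradient]
    exact hgb x hxne
  · -- subsolution property
    intro x hx
    obtain ⟨hx1, hx2⟩ := hx
    rw [mem_ball, dist_eq_norm] at hx1
    rw [mem_closedBall, dist_eq_norm, not_le] at hx2
    have hxne : x ≠ xs := by
      intro h0
      rw [h0, sub_self, norm_zero] at hx2
      linarith
    constructor
    · rw [(hvgrad xs c ε α R hxne).gradient]
      exact hzne x hxne
    · rw [diverg_formula n b p ε α R (by linarith) xs c hxne hzne]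
      have ht : ⟪x - xs, zmap xs c ε α x⟫ ^ 2 ≤ ‖zmap xs c ε α x‖ ^ 2 * ‖x - xs‖ ^ 2 := by
        have habs := abs_real_inner_le_norm (x - xs) (zmap xs c ε α x)
        nlinarith [abs_nonneg (⟪x - xs, zmap xs c ε α x⟫ : ℝ), sq_abs (⟪x - xs, zmap xs c ε α x⟫ : ℝ),
          norm_nonneg (x - xs), norm_nonneg (zmap xs c ε α x)]
      exact arith_key n b p (‖c‖ / 2) (3 * ‖c‖ / 2) R α ε ‖x - xs‖ ‖zmap xs c ε α x‖
        ⟪x - xs, zmap xs c ε α x⟫ hb hp hρ1 hρ12 (hzlow x hxne) (hzhigh x hxne) hR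
        hx2.le hε0 hα0 hαM ht
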